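/- arXiv:1809.05253 — 2 statements merged into one kernel-verified Lean document; each statement's English description precedes it below -/
import Mathlib

section
/- Let A = {A_0,...,A_7} be a building family in a finite abelian group G. Then in ℤ[G]: (A_0 − A_4)(A_6 − A_2) + (A_1 − A_5)(A_7 − A_3) = −(A_0 + A_1 + A_2 + A_3). -/
open Finset

noncomputable section

variable {G : Type*}

/-- The element of the group ring `ℤ[G]` associated to a finite subset `D ⊆ G`. -/
def grp [AddCommGroup G] [DecidableEq G] (D : Finset G) : AddMonoidAlgebra ℤ G :=
  ∑ x ∈ D, AddMonoidAlgebra.single x 1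

/-- `D^{(-1)} = {-x : x ∈ D}`. -/
def negSet [AddCommGroup G] [DecidableEq G] (D : Finset G) : Finset G :=
  D.image (fun x => -x)

/-- A subset is symmetric if `D = -D`. -/
def IsSymmetric [AddCommGroup G] [DecidableEq G] (D : Finset G) : Prop :=
  negSet D = D

/-- `G* = G \ {0}` as a finset. -/
def Gstar (G : Type*) [AddCommGroup G] [Fintype G] [DecidableEq G] : Finset G :=
  Finset.univ \ {0}

/-- A difference family of type `H`: four blocks with `λ = Σ|D_i| - |G|`. -/
def IsTypeH [AddCommGroup G] [Fintype G] [DecidableEq G] (D : Fin 4 → Finset G) : Prop :=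
  ∑ i, grp (D i) * grp (negSet (D i)) =
    ((∑ i, ((D i).card : ℤ)) - (Fintype.card G : ℤ)) • grp (Finset.univ : Finset G)
      + (Fintype.card G : ℤ) • AddMonoidAlgebra.single (0 : G) (1 : ℤ)

/-- A difference family of type `H_4^*`: four blocks with `λ = Σ|B_i| - (|G|+1)`. -/
def IsTypeH4star [AddCommGroup G] [Fintype G] [DecidableEq G] (B : Fin 4 → Finset G) : Prop :=
  ∑ i, grp (B i) * grp (negSet (B i)) =
    ((∑ i, ((B i).card : ℤ)) - ((Fintype.card G : ℤ) + 1)) • grp (Finset.univ : Finset G)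
      + ((Fintype.card G : ℤ) + 1) • AddMonoidAlgebra.single (0 : G) (1 : ℤ)

/-- A difference family of type `H_2^*`: two blocks with `λ = Σ|S_i| - (|G|+1)/2`. -/
def IsTypeH2star [AddCommGroup G] [Fintype G] [DecidableEq G] (S : Fin 2 → Finset G) : Prop :=
  ∑ i, grp (S i) * grp (negSet (S i)) =
    ((∑ i, ((S i).card : ℤ)) - ((Fintype.card G : ℤ) + 1) / 2) • grp (Finset.univ : Finset G)
      + (((Fintype.card G : ℤ) + 1) / 2) • AddMonoidAlgebra.single (0 : G) (1 : ℤ)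

/-- Condition (d3). -/
def CondD3 [AddCommGroup G] [Fintype G] [DecidableEq G] (D : Fin 4 → Finset G) : Prop :=
  grp (D 0) * grp (negSet (D 2)) + grp (D 2) * grp (negSet (D 0))
    + grp (D 1) * grp (negSet (D 3)) + grp (D 3) * grp (negSet (D 1)) =
    ((∑ i, ((D i).card : ℤ)) - (Fintype.card G : ℤ) + 1) • grp (Finset.univ : Finset G)

/-- Condition (c1). -/
def CondC1 [AddCommGroup G] [Fintype G] [DecidableEq G] (S : Fin 4 → Finset G) : Prop :=
  grp (S 0) * grp (negSet (S 2)) + grp (S 2) * grp (negSet (S 0))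
    + grp (S 1) * grp (negSet (S 3)) + grp (S 3) * grp (negSet (S 1)) =
    ((∑ i, ((S i).card : ℤ)) - (Fintype.card G : ℤ)) • grp (Finset.univ : Finset G)

/-- Condition (d2). -/
def CondD2 [AddCommGroup G] [Fintype G] [DecidableEq G] (D : Fin 4 → Finset G) : Prop :=
  ∃ E₀ E₁ : Finset G, E₀ ⊆ Gstar G ∧ E₁ ⊆ Gstar G ∧
    grp (D 0) + grp (D 1) - grp (D 2) - grp (D 3) = grp E₀ - grp (Gstar G \ E₀) ∧
    grp (D 0) + grp (D 3) - grp (D 1) - grp (D 2) = grp E₁ - grp (Gstar G \ E₁) ∧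
    IsTypeH4star ![E₀, E₁, Gstar G \ E₀, Gstar G \ E₁]

/-- A building family: eight symmetric, pairwise disjoint subsets partitioning `G*`,
satisfying (a3) and (a4). -/
def IsBuildingFamily [AddCommGroup G] [Fintype G] [DecidableEq G] (A : Fin 8 → Finset G) : Prop :=
  (∀ i, IsSymmetric (A i)) ∧
  (∀ i j, i ≠ j → Disjoint (A i) (A j)) ∧
  (Finset.univ.biUnion A = Gstar G) ∧
  IsTypeH4star ![A 0 ∪ A 1 ∪ A 6 ∪ A 7, A 2 ∪ A 3 ∪ A 4 ∪ A 5,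
    A 0 ∪ A 3 ∪ A 5 ∪ A 6, A 1 ∪ A 2 ∪ A 4 ∪ A 7] ∧
  (∑ i, grp (A i) * grp (A i)) - (∑ i, grp (A i) * grp (A (i + 4))) =
    ((Fintype.card G : ℤ) - 1) • AddMonoidAlgebra.single (0 : G) (1 : ℤ)
      + ((grp (A 0) + grp (A 1) + grp (A 2) + grp (A 3))
        - (grp (A 4) + grp (A 5) + grp (A 6) + grp (A 7)))

end

section MyAux
variable {G : Type*} [AddCommGroup G] [DecidableEq G]

lemma my_grp_union {X Y : Finset G} (h : Disjoint X Y) : grp (X ∪ Y) = grp X + grp Y := by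
  unfold grp; rw [Finset.sum_union h]

lemma my_negSet_union (X Y : Finset G) : negSet (X ∪ Y) = negSet X ∪ negSet Y := by
  unfold negSet; exact Finset.image_union _ _

omit [DecidableEq G] in
lemma my_smul4_cancel (x y : AddMonoidAlgebra ℤ G) (h : (4:ℤ) • x = (4:ℤ) • y) : x = y := by
  ext t
  have h2 : ((4:ℤ) • x).coeff t = ((4:ℤ) • y).coeff t := by rw [h]
  rw [AddMonoidAlgebra.coeff_smul_apply, AddMonoidAlgebra.coeff_smul_apply, smul_eq_mul, smul_eq_mul] at h2
  omega

lemma my_grp_un4 {a b c d : Finset G} (h1 : Disjoint a b) (h2 : Disjoint a c) (h3 : Disjoint a d)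
    (h4 : Disjoint b c) (h5 : Disjoint b d) (h6 : Disjoint c d) :
    grp (a ∪ b ∪ c ∪ d) = grp a + grp b + grp c + grp d := by
  rw [my_grp_union (Finset.disjoint_union_left.mpr
      ⟨Finset.disjoint_union_left.mpr ⟨h3, h5⟩, h6⟩),
    my_grp_union (Finset.disjoint_union_left.mpr ⟨h2, h4⟩), my_grp_union h1]

omit [AddCommGroup G] in
lemma my_card_un4 {a b c d : Finset G} (h1 : Disjoint a b) (h2 : Disjoint a c) (h3 : Disjoint a d)
    (h4 : Disjoint b c) (h5 : Disjoint b d) (h6 : Disjoint c d) :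
    ((a ∪ b ∪ c ∪ d).card : ℤ) = a.card + b.card + c.card + d.card := by
  rw [Finset.card_union_of_disjoint (Finset.disjoint_union_left.mpr
      ⟨Finset.disjoint_union_left.mpr ⟨h3, h5⟩, h6⟩),
    Finset.card_union_of_disjoint (Finset.disjoint_union_left.mpr ⟨h2, h4⟩),
    Finset.card_union_of_disjoint h1]
  push_cast; ring

lemma my_negSet_un4 {a b c d : Finset G} (ha : IsSymmetric a) (hb : IsSymmetric b)
    (hc : IsSymmetric c) (hd : IsSymmetric d) : negSet (a ∪ b ∪ c ∪ d) = a ∪ b ∪ c ∪ d := by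
  rw [my_negSet_union, my_negSet_union, my_negSet_union, ha, hb, hc, hd]

variable [Fintype G]

lemma my_grp_univ_mul :
    grp (Finset.univ : Finset G) * grp (Finset.univ : Finset G)
      = (Fintype.card G : ℤ) • grp (Finset.univ : Finset G) := by
  unfold grp
  rw [Finset.sum_mul_sum]
  simp only [AddMonoidAlgebra.single_mul_single, mul_one]
  have h1 : ∀ x : G, ∑ y : G, AddMonoidAlgebra.single (x + y) (1:ℤ)
      = ∑ y : G, AddMonoidAlgebra.single y (1:ℤ) := fun x =>
    Fintype.sum_equiv (Equiv.addLeft x) _ _ (fun y => rfl)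
  simp only [h1, Finset.sum_const, Finset.card_univ, natCast_zsmul]

lemma my_grp_gstar : grp (Gstar G) = grp (Finset.univ : Finset G) - 1 := by
  have h : grp (Gstar G) + grp ({0} : Finset G) = grp (Finset.univ : Finset G) := by
    unfold grp Gstar
    exact Finset.sum_sdiff (Finset.subset_univ _)
  have h0 : grp ({0} : Finset G) = 1 := by
    unfold grp
    rw [Finset.sum_singleton, ← AddMonoidAlgebra.one_def]
  rw [h0] at h
  exact eq_sub_of_add_eq h

end MyAux

/-- the identity `U = -(A₀+A₁+A₂+A₃)` for a building family. -/


theorem building_family_U_identity {G : Type*} [AddCommGroup G] [Fintype G]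
    [DecidableEq G] (A : Fin 8 → Finset G) (hA : IsBuildingFamily A) :
    (grp (A 0) - grp (A 4)) * (grp (A 6) - grp (A 2))
      + (grp (A 1) - grp (A 5)) * (grp (A 7) - grp (A 3)) =
      -(grp (A 0) + grp (A 1) + grp (A 2) + grp (A 3)) := by
  obtain ⟨hSym, hDisj, hUnion, hH4, hA4⟩ := hA
  have hpd : (↑(Finset.univ : Finset (Fin 8)) : Set (Fin 8)).PairwiseDisjoint A :=
    fun i _ j _ hij => hDisj i j hij
  have hsum8 : ∑ i : Fin 8, grp (A i) = grp (Gstar G) := by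
    rw [← hUnion]; unfold grp; rw [Finset.sum_biUnion hpd]
  have hgcard : (Gstar G).card = Fintype.card G - 1 := by
    unfold Gstar
    rw [Finset.card_sdiff_of_subset (Finset.subset_univ _)]
    simp
  have hvpos : 1 ≤ Fintype.card G := Fintype.card_pos
  have hcard8 : ((∑ i : Fin 8, (A i).card : ℕ) : ℤ) = (Fintype.card G : ℤ) - 1 := by
    rw [← Finset.card_biUnion (fun i _ j _ hij => hDisj i j hij), hUnion, hgcard]
    omega
  unfold IsTypeH4star at hH4
  rw [Fin.sum_univ_four, Fin.sum_univ_four] at hH4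
  simp only [Matrix.cons_val_zero, Matrix.cons_val_one, Matrix.head_cons,
    Matrix.cons_val_two, Matrix.tail_cons, Matrix.cons_val_three] at hH4
  rw [Fin.sum_univ_eight, Fin.sum_univ_eight] at hA4
  rw [Fin.sum_univ_eight] at hsum8 hcard8
  rw [my_negSet_un4 (hSym 0) (hSym 1) (hSym 6) (hSym 7),
    my_negSet_un4 (hSym 2) (hSym 3) (hSym 4) (hSym 5),
    my_negSet_un4 (hSym 0) (hSym 3) (hSym 5) (hSym 6),
    my_negSet_un4 (hSym 1) (hSym 2) (hSym 4) (hSym 7),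
    my_grp_un4 (hDisj 0 1 (by decide)) (hDisj 0 6 (by decide)) (hDisj 0 7 (by decide)) (hDisj 1 6 (by decide)) (hDisj 1 7 (by decide)) (hDisj 6 7 (by decide)),
    my_grp_un4 (hDisj 2 3 (by decide)) (hDisj 2 4 (by decide)) (hDisj 2 5 (by decide)) (hDisj 3 4 (by decide)) (hDisj 3 5 (by decide)) (hDisj 4 5 (by decide)),
    my_grp_un4 (hDisj 0 3 (by decide)) (hDisj 0 5 (by decide)) (hDisj 0 6 (by decide)) (hDisj 3 5 (by decide)) (hDisj 3 6 (by decide)) (hDisj 5 6 (by decide)),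
    my_grp_un4 (hDisj 1 2 (by decide)) (hDisj 1 4 (by decide)) (hDisj 1 7 (by decide)) (hDisj 2 4 (by decide)) (hDisj 2 7 (by decide)) (hDisj 4 7 (by decide)),
    my_card_un4 (hDisj 0 1 (by decide)) (hDisj 0 6 (by decide)) (hDisj 0 7 (by decide)) (hDisj 1 6 (by decide)) (hDisj 1 7 (by decide)) (hDisj 6 7 (by decide)),
    my_card_un4 (hDisj 2 3 (by decide)) (hDisj 2 4 (by decide)) (hDisj 2 5 (by decide)) (hDisj 3 4 (by decide)) (hDisj 3 5 (by decide)) (hDisj 4 5 (by decide)),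
    my_card_un4 (hDisj 0 3 (by decide)) (hDisj 0 5 (by decide)) (hDisj 0 6 (by decide)) (hDisj 3 5 (by decide)) (hDisj 3 6 (by decide)) (hDisj 5 6 (by decide)),
    my_card_un4 (hDisj 1 2 (by decide)) (hDisj 1 4 (by decide)) (hDisj 1 7 (by decide)) (hDisj 2 4 (by decide)) (hDisj 2 7 (by decide)) (hDisj 4 7 (by decide))] at hH4
  simp only [show (((0:Fin 8) + 4) = 4) from by decide, show (((1:Fin 8) + 4) = 5) from by decide, show (((2:Fin 8) + 4) = 6) from by decide, show (((3:Fin 8) + 4) = 7) from by decide, show (((4:Fin 8) + 4) = 0) from by decide, show (((5:Fin 8) + 4) = 1) from by decide, show (((6:Fin 8) + 4) = 2) from by decide, show (((7:Fin 8) + 4) = 3) from by decide] at hA4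
  rw [← AddMonoidAlgebra.one_def] at hH4 hA4
  have hg := my_grp_univ_mul (G := G)
  rw [zsmul_eq_mul, zsmul_eq_mul] at hH4
  rw [zsmul_eq_mul] at hA4
  rw [zsmul_eq_mul] at hg
  push_cast at hH4 hA4 hg
  have hK := congrArg (fun z : ℤ => (z : AddMonoidAlgebra ℤ G)) hcard8
  push_cast at hK
  have hs : grp (A 0) + grp (A 1) + grp (A 2) + grp (A 3) + grp (A 4) + grp (A 5) + grp (A 6) + grp (A 7) = grp Finset.univ - 1 := by
    rw [hsum8, my_grp_gstar]
  apply my_smul4_cancel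
  rw [zsmul_eq_mul, zsmul_eq_mul]
  push_cast
  linear_combination 2*hH4 - 2*hA4 + (4 - 2*grp Finset.univ - 2*(grp (A 0) + grp (A 1) + grp (A 2) + grp (A 3) + grp (A 4) + grp (A 5) + grp (A 6) + grp (A 7)))*hs
    - 2*hg + 4*grp Finset.univ * hK
end

section
/- Let P be a Paley type partial difference set in a finite abelian group G. Then the family {P, P∪{0_G}, P∪{0_G}, G∖P} is a difference family of type H_4* in G that satisfies condition (c1): with S_0 = P, S_1 = P∪{0}, S_2 = P∪{0}, S_3 = G∖P, one has S_0·S_2^{(−1)} + S_2·S_0^{(−1)} + S_1·S_3^{(−1)} + S_3·S_1^{(−1)} = (Σ_{i=0}^{3}|S_i| − |G|)·G in ℤ[G]. -/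
open Finset

noncomputable section PaleyHelpers
variable {G : Type*} [AddCommGroup G] [DecidableEq G]

lemma mem_negSet {D : Finset G} {a : G} : a ∈ negSet D ↔ -a ∈ D := by
  simp [negSet, neg_eq_iff_eq_neg]

lemma grp_apply (D : Finset G) (a : G) : (grp D).coeff a = if a ∈ D then 1 else 0 := by
  classical
  rw [grp, AddMonoidAlgebra.coeff_sum, Finsupp.finset_sum_apply]
  simp [Finsupp.single_apply]

lemma grp_mul (D E : Finset G) :
    grp D * grp E = ∑ x ∈ D, ∑ y ∈ E, AddMonoidAlgebra.single (x + y) (1 : ℤ) := by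
  simp [grp, Finset.sum_mul_sum, AddMonoidAlgebra.single_mul_single]

lemma univ_mul_grp [Fintype G] (D : Finset G) :
    grp (Finset.univ : Finset G) * grp D = (D.card : ℤ) • grp (Finset.univ : Finset G) := by
  rw [grp_mul, Finset.sum_comm]
  have h : ∀ y ∈ D, (∑ x : G, AddMonoidAlgebra.single (x + y) (1 : ℤ))
      = grp (Finset.univ : Finset G) := fun y _ => by
    rw [grp]
    exact Fintype.sum_bijective (· + y) (add_left_injective y).bijective_of_finite _ _
      (fun x => rfl)
  rw [Finset.sum_congr rfl h, Finset.sum_const, natCast_zsmul]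

lemma grp_symm {D : Finset G} (h : IsSymmetric D) : grp (negSet D) = grp D := by rw [h]
lemma mem_symmP {D : Finset G} (h : IsSymmetric D) {a : G} : -a ∈ D ↔ a ∈ D := by
  conv_lhs => rw [← h]
  rw [mem_negSet, neg_neg]

lemma zero_notmem_of_pds [Fintype G] {P : Finset G} (k : ℕ)
    (hsymP : IsSymmetric P) (hcard : P.card = 2 * k)
    (hP : grp P * grp P =
      (2 * k : ℤ) • AddMonoidAlgebra.single (0 : G) (1 : ℤ) - grp P + (k : ℤ) • grp (Gstar G)) :
    (0 : G) ∉ P := by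
  have h0 := congrArg (fun f : AddMonoidAlgebra ℤ G => f.coeff 0) hP
  rw [grp_mul] at h0
  have hL : (∑ x ∈ P, ∑ y ∈ P, AddMonoidAlgebra.single (x + y) (1 : ℤ)).coeff 0 = (P.card : ℤ) := by
    rw [AddMonoidAlgebra.coeff_sum, Finsupp.finset_sum_apply]
    have inner : ∀ x ∈ P, (∑ y ∈ P, AddMonoidAlgebra.single (x + y) (1 : ℤ)).coeff 0 = 1 := by
      intro x hx
      rw [AddMonoidAlgebra.coeff_sum, Finsupp.finset_sum_apply]
      have hmem : -x ∈ P := (mem_symmP hsymP).mpr hx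
      rw [Finset.sum_eq_single_of_mem (-x) hmem]
      · simp [Finsupp.single_apply]
      · intro y hy hne
        simp only [AddMonoidAlgebra.coeff_single, Finsupp.single_apply]
        rw [if_neg]
        intro h
        exact hne (eq_neg_of_add_eq_zero_left (by rw [add_comm]; exact h))
    rw [Finset.sum_congr rfl inner, Finset.sum_const, nsmul_eq_mul, mul_one]
  rw [hL] at h0
  have hR : ((2 * k : ℤ) • AddMonoidAlgebra.single (0 : G) (1 : ℤ) - grp P
      + (k : ℤ) • grp (Gstar G)).coeff 0 = 2 * k - (if (0 : G) ∈ P then 1 else 0) := by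
    rw [AddMonoidAlgebra.coeff_add, AddMonoidAlgebra.coeff_sub, AddMonoidAlgebra.coeff_smul,
      AddMonoidAlgebra.coeff_smul, Finsupp.add_apply, Finsupp.sub_apply, Finsupp.smul_apply, Finsupp.smul_apply,
      grp_apply, grp_apply]
    simp [Gstar, Finsupp.single_apply]
  rw [hR, hcard] at h0
  intro hmem
  rw [if_pos hmem] at h0
  push_cast at h0
  linarith

lemma grp_sdiff [Fintype G] (P : Finset G) :
    grp ((Finset.univ : Finset G) \ P) = grp (Finset.univ : Finset G) - grp P := by
  rw [grp, grp, grp, Finset.sum_sdiff_eq_sub (Finset.subset_univ P)]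

lemma grp_Gstar' [Fintype G] :
    grp (Gstar G) = grp (Finset.univ : Finset G) - AddMonoidAlgebra.single (0 : G) (1 : ℤ) := by
  rw [Gstar, grp_sdiff]
  congr 1
  rw [grp, Finset.sum_singleton]

end PaleyHelpers

/-- a Paley type partial difference set yields a type-`H_4^*` difference
family `{P, P∪{0}, P∪{0}, G∖P}` satisfying (c1). Here `|G| = 4k+1`. -/
theorem paley_pds_gives_H4star_with_c1 {G : Type*} [AddCommGroup G] [Fintype G]
    [DecidableEq G] (P : Finset G) (k : ℕ)
    (hv : Fintype.card G = 4 * k + 1) (hsymP : IsSymmetric P) (hcard : P.card = 2 * k)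
    (hP : grp P * grp P =
      (2 * k : ℤ) • AddMonoidAlgebra.single (0 : G) (1 : ℤ) - grp P + (k : ℤ) • grp (Gstar G)) :
    IsTypeH4star ![P, insert (0 : G) P, insert (0 : G) P, (Finset.univ : Finset G) \ P] ∧
      CondC1 ![P, insert (0 : G) P, insert (0 : G) P, (Finset.univ : Finset G) \ P] := by
  classical
  have h0P : (0 : G) ∉ P := zero_notmem_of_pds k hsymP hcard hP
  have hsP : negSet P = P := hsymP
  -- symmetry of the blocks
  have hsym1 : negSet (insert (0 : G) P) = insert (0 : G) P := by
    ext a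
    simp only [mem_negSet, Finset.mem_insert, neg_eq_zero]
    rw [mem_symmP hsymP]
  have hsym3 : negSet ((Finset.univ : Finset G) \ P) = (Finset.univ : Finset G) \ P := by
    ext a
    simp only [mem_negSet, Finset.mem_sdiff, Finset.mem_univ, true_and]
    rw [mem_symmP hsymP]
  -- group-ring values
  have gins : grp (insert (0 : G) P) = 1 + grp P := by
    rw [grp, Finset.sum_insert h0P, ← grp, AddMonoidAlgebra.one_def]
  have gsd : grp ((Finset.univ : Finset G) \ P) = grp (Finset.univ : Finset G) - grp P :=
    grp_sdiff P
  have hP' : grp P * grp P = 2 * (k : AddMonoidAlgebra ℤ G) * 1 - grp P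
      + (k : AddMonoidAlgebra ℤ G) * (grp (Finset.univ : Finset G) - 1) := by
    rw [hP, grp_Gstar', ← AddMonoidAlgebra.one_def, zsmul_eq_mul, zsmul_eq_mul]
    push_cast
    ring
  have up : grp (Finset.univ : Finset G) * grp P
      = 2 * (k : AddMonoidAlgebra ℤ G) * grp (Finset.univ : Finset G) := by
    rw [univ_mul_grp, hcard, zsmul_eq_mul]; push_cast; ring
  have uu : grp (Finset.univ : Finset G) * grp (Finset.univ : Finset G)
      = (4 * (k : AddMonoidAlgebra ℤ G) + 1) * grp (Finset.univ : Finset G) := by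
    rw [univ_mul_grp, Finset.card_univ, hv, zsmul_eq_mul]; push_cast; ring
  -- cardinalities
  have c1 : (insert (0 : G) P).card = 2 * k + 1 := by
    rw [Finset.card_insert_of_notMem h0P, hcard]
  have c3 : ((Finset.univ : Finset G) \ P).card = 2 * k + 1 := by
    rw [Finset.card_sdiff_of_subset (Finset.subset_univ P), Finset.card_univ, hv, hcard]
    omega
  constructor
  · unfold IsTypeH4star
    simp only [Fin.sum_univ_four, Matrix.cons_val_zero, Matrix.cons_val_one, Matrix.head_cons,
      Matrix.cons_val_two, Matrix.tail_cons, Matrix.cons_val_three, hsym1, hsym3, hsP, ← AddMonoidAlgebra.one_def,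
      gins, gsd, c1, c3, hcard, hv, zsmul_eq_mul]
    push_cast
    linear_combination (4 : AddMonoidAlgebra ℤ G) * hP' - 2 * up + uu
  · unfold CondC1
    simp only [Fin.sum_univ_four, Matrix.cons_val_zero, Matrix.cons_val_one, Matrix.head_cons,
      Matrix.cons_val_two, Matrix.tail_cons, Matrix.cons_val_three, hsym1, hsym3, hsP, ← AddMonoidAlgebra.one_def,
      gins, gsd, c1, c3, hcard, hv, zsmul_eq_mul]
    push_cast
    linear_combination (2 : AddMonoidAlgebra ℤ G) * up
end
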